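/- For real r ∈ (0,1) and δ ∈ [-1,1], define K(δ, r) = (r + δ)/(1 + δr) + ((1 - δ²)/(1 + δr)²)·c where c > (1 - r²)/2 is a positive constant. Then K(1, r) = 1 and ∂K/∂δ evaluated at δ = 1 equals (2/(1+r)²)·((1 - r²)/2 - c) < 0; consequently K(1 - ε, r) > 1 for all sufficiently small ε > 0. -/

import Mathlib

theorem sharpness_K (r c : ℝ) (hr : r ∈ Set.Ioo (0:ℝ) 1)
    (hc : (1 - r^2)/2 < c)
    (K : ℝ → ℝ)
    (hK : K = fun δ => (r + δ)/(1 + δ*r) + ((1 - δ^2)/(1 + δ*r)^2) * c) :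
    K 1 = 1 ∧
    deriv K 1 = (2/(1 + r)^2) * ((1 - r^2)/2 - c) ∧
    deriv K 1 < 0 ∧
    ∀ᶠ ε in nhdsWithin 0 (Set.Ioi (0:ℝ)), K (1 - ε) > 1 := by
  obtain ⟨hr0, hr1⟩ := hr
  have hden : (1:ℝ) + 1*r ≠ 0 := by nlinarith
  have hden2 : ((1:ℝ) + 1*r)^2 ≠ 0 := pow_ne_zero _ hden
  set d : ℝ := (2/(1 + r)^2) * ((1 - r^2)/2 - c) with hd
  have hK1 : K 1 = 1 := by
    subst hK
    simp only
    field_simp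
    ring
  have h1 := ((hasDerivAt_id (1:ℝ)).const_add r).div
      (((hasDerivAt_id (1:ℝ)).mul_const r).const_add 1) hden
  have hg := (((hasDerivAt_id (1:ℝ)).mul_const r).const_add 1).pow 2
  have hf := ((hasDerivAt_id (1:ℝ)).pow 2).const_sub 1
  have h2 := (hf.div hg (by simpa using hden2)).mul_const c
  have hKd : HasDerivAt K d 1 := by
    have h3 := h1.add h2
    rw [hK]
    convert h3 using 1
    · rfl
    · rfl
    · rfl
    simp only [id_eq, Pi.pow_apply]
    rw [hd]
    field_simp
    ring
  have hderiv : deriv K 1 = d := hKd.deriv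
  have hdlt : d < 0 := by
    rw [hd]
    apply mul_neg_of_pos_of_neg
    · positivity
    · linarith
  refine ⟨hK1, hderiv, hderiv ▸ hdlt, ?_⟩
  have hslope : Filter.Tendsto (slope K 1) (nhdsWithin 1 {(1:ℝ)}ᶜ) (nhds d) :=
    hasDerivAt_iff_tendsto_slope.mp hKd
  have hneg : ∀ᶠ y in nhdsWithin 1 {(1:ℝ)}ᶜ, slope K 1 y < 0 :=
    hslope.eventually (Iio_mem_nhds hdlt)
  have htend : Filter.Tendsto (fun ε : ℝ => 1 - ε) (nhdsWithin 0 (Set.Ioi 0))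
      (nhdsWithin 1 {(1:ℝ)}ᶜ) := by
    rw [tendsto_nhdsWithin_iff]
    constructor
    · have h : Filter.Tendsto (fun ε : ℝ => 1 - ε) (nhds 0) (nhds 1) := by
        have := (Filter.tendsto_id : Filter.Tendsto id (nhds (0:ℝ)) (nhds 0)).const_sub (1:ℝ)
        simpa using this
      exact h.mono_left nhdsWithin_le_nhds
    · filter_upwards [self_mem_nhdsWithin] with ε (hε : ε ∈ Set.Ioi 0)
      simp only [Set.mem_compl_iff, Set.mem_singleton_iff]
      intro h
      have : ε = 0 := by linarith [sub_eq_self.mp h]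
      exact absurd this (ne_of_gt hε)
  filter_upwards [htend.eventually hneg, self_mem_nhdsWithin] with ε hs (hε : ε ∈ Set.Ioi 0)
  have hε0 : (0:ℝ) < ε := hε
  rw [slope_def_field, div_neg_iff] at hs
  rcases hs with ⟨h1', h2'⟩ | ⟨h1', h2'⟩
  · linarith
  · rw [hK1] at h1'
    linarith
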